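/- Let N ≥ 2 be an integer and let z = r·e^{iφ} ∈ ℂ with 1 − 1/N ≤ r ≤ 1 and |φ| ≤ 1/√N. Then Re(−(1−z)²/(1+z)) ≤ 4/N. -/

import Mathlib

open Real

noncomputable section

/-- estimate (3.17) of the paper: for an integer `N ≥ 2` and
`z = r e^{iφ}` with `1 - 1/N ≤ r ≤ 1` and `|φ| ≤ 1/√N`, one has
`Re(-(1-z)²/(1+z)) ≤ 4/N`. -/
theorem re_neg_one_sub_sq_div_one_add_le
    (N : ℕ) (hN : 2 ≤ N) (r φ : ℝ)
    (hr₁ : 1 - 1 / (N : ℝ) ≤ r) (hr₂ : r ≤ 1)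
    (hφ : |φ| ≤ 1 / Real.sqrt N) :
    (-((1 - (r : ℂ) * Complex.exp (φ * Complex.I)) ^ 2 /
        (1 + (r : ℂ) * Complex.exp (φ * Complex.I)))).re ≤ 4 / (N : ℝ) := by
  have hN2 : (2:ℝ) ≤ N := by exact_mod_cast hN
  have hNpos : (0:ℝ) < N := by linarith
  set c := Real.cos φ with hc
  set s := Real.sin φ with hs
  have hz : (r : ℂ) * Complex.exp (↑φ * Complex.I)
      = Complex.ofReal (r*c) + Complex.ofReal (r*s) * Complex.I := by
    rw [Complex.exp_mul_I, ← Complex.ofReal_cos, ← Complex.ofReal_sin,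
      Complex.ofReal_mul, Complex.ofReal_mul]
    ring
  rw [hz]
  rw [← neg_div, Complex.div_re]
  simp only [Complex.normSq_apply, Complex.add_re, Complex.add_im, Complex.one_re,
    Complex.one_im, Complex.mul_re, Complex.mul_im, Complex.ofReal_re, Complex.ofReal_im,
    Complex.I_re, Complex.I_im, Complex.sub_re, Complex.sub_im]
  simp only [pow_two, Complex.neg_re, Complex.neg_im, Complex.mul_re, Complex.mul_im,
    Complex.sub_re, Complex.sub_im, Complex.one_re, Complex.one_im, Complex.add_re,
    Complex.add_im, Complex.ofReal_re, Complex.ofReal_im, Complex.I_re, Complex.I_im]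
  have hsN : 1 ≤ Real.sqrt N := by
    rw [show (1:ℝ) = Real.sqrt 1 from Real.sqrt_one.symm]
    exact Real.sqrt_le_sqrt (by linarith)
  have hφ1 : |φ| ≤ 1 := le_trans hφ (by rw [div_le_one (by linarith)]; exact hsN)
  have hpi := Real.pi_gt_three
  have hc0 : 0 ≤ c := by
    apply Real.cos_nonneg_of_mem_Icc
    constructor
    · nlinarith [abs_le.mp hφ1]
    · nlinarith [abs_le.mp hφ1]
  have hc1 : c ≤ 1 := Real.cos_le_one φ
  have hNhalf : 1/(N:ℝ) ≤ 1/2 := by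
    rw [div_le_div_iff₀ (by linarith) (by norm_num)]; linarith
  have hr0 : (0:ℝ) ≤ r := by linarith
  have hrc1 : r * c ≤ 1 := by nlinarith
  have hs2 : s ^ 2 ≤ 1 / N := by
    have h1 : φ ^ 2 ≤ (1 / Real.sqrt N) ^ 2 := by
      rw [← sq_abs]; exact pow_le_pow_left₀ (abs_nonneg φ) hφ 2
    rw [div_pow, one_pow, Real.sq_sqrt hNpos.le] at h1
    exact le_trans (Real.sin_sq_le_sq) h1
  have hcs : c ^ 2 + s ^ 2 = 1 := by rw [hc, hs]; exact Real.cos_sq_add_sin_sq φ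
  have main : ∀ A B D : ℝ, 0 < D → A + B ≤ 4 / N * D → A / D + B / D ≤ 4 / (N:ℝ) := by
    intro A B D hD h
    rw [← add_div, div_le_iff₀ hD]
    linarith
  apply main
  · nlinarith
  · ring_nf
    have hNi : (0:ℝ) ≤ (N:ℝ)⁻¹ := by positivity
    have h1 : 0 ≤ (1 - r^2) * (1 - r*c) := mul_nonneg (by nlinarith) (by linarith)
    have h2 : r^2 * s^2 ≤ (N:ℝ)⁻¹ := by
      calc r^2 * s^2 ≤ 1 * s^2 := mul_le_mul_of_nonneg_right (by nlinarith) (sq_nonneg s)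
        _ ≤ (N:ℝ)⁻¹ := by rw [one_mul, ← one_div]; exact hs2
    have key : -1 + r * c + r ^ 2 * c ^ 2 + r ^ 2 * s ^ 2 * 3 +
        (-(r ^ 3 * c * s ^ 2) - r ^ 3 * c ^ 3)
        = -((1 - r^2) * (1 - r*c)) + 2 * (r^2 * s^2) := by
      linear_combination (r^2 - r^3*c) * hcs
    nlinarith [mul_nonneg (mul_nonneg hr0 hc0) hNi,
      mul_nonneg (mul_nonneg (sq_nonneg r) (sq_nonneg c)) hNi,
      mul_nonneg (mul_nonneg (sq_nonneg r) (sq_nonneg s)) hNi]
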